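/- arXiv:1907.02137 — 2 statements merged into one kernel-verified Lean document; each statement's English description precedes it below -/
import Mathlib

section
/- Let P be any subset of K with 1 ∈ P. Then there exists a mutation algebra (A, M, ω) over K containing an idempotent e (e·e = e, e ≠ 0) with ω(e) = 1 such that the set of eigenvalues of the left-multiplication operator L_e : A → A, x ↦ e·x, is exactly P (λ ∈ K is an eigenvalue iff there exists v ≠ 0 in A with e·v = λ·v). -/
namespace Evanescent

universe u v

variable {T : Type u}

/-- The commutativity relation on the free magma on `T`. -/
inductive CommRel (T : Type u) : FreeMagma T → FreeMagma T → Prop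
  | comm (a b : FreeMagma T) : CommRel T (a * b) (b * a)
  | mul_left {a b : FreeMagma T} (c : FreeMagma T) :
      CommRel T a b → CommRel T (a * c) (b * c)
  | mul_right (c : FreeMagma T) {a b : FreeMagma T} :
      CommRel T a b → CommRel T (c * a) (c * b)

/-- The free commutative magma on `T`: the set of commutative nonassociative
monomials (words) in the variables `T`. -/
def FreeCommMagma (T : Type u) : Type u := Quot (CommRel T)

namespace FreeCommMagma

instance : Mul (FreeCommMagma T) :=
  ⟨Quot.map₂ (· * ·) (fun a _ _ h => CommRel.mul_right a h)
    (fun _ _ b h => CommRel.mul_left b h)⟩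

/-- The class of a nonassociative word in the free commutative magma. -/
def mk (w : FreeMagma T) : FreeCommMagma T := Quot.mk (CommRel T) w

/-- The generator of the free commutative magma corresponding to a variable. -/
def of (t : T) : FreeCommMagma T := mk (FreeMagma.of t)

@[simp] lemma mk_mul (a b : FreeMagma T) : mk a * mk b = mk (a * b) := rfl

protected lemma mul_comm (a b : FreeCommMagma T) : a * b = b * a := by
  induction a using Quot.ind
  induction b using Quot.ind
  exact Quot.sound (CommRel.comm _ _)

instance : CommMagma (FreeCommMagma T) := ⟨FreeCommMagma.mul_comm⟩

end FreeCommMagma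

section Peirce

variable (R : Type v) [Semiring R] [DecidableEq T]

/-- The Peirce polynomial of a (noncommutative) nonassociative word, with
coefficients in `R`. -/
noncomputable def peirceAux (i : T) : FreeMagma T → Polynomial R
  | .of j => if j = i then 1 else 0
  | .mul u v => Polynomial.X * (peirceAux i u + peirceAux i v)

@[simp] lemma peirceAux_mul (i : T) (u v : FreeMagma T) :
    peirceAux R i (u * v) = Polynomial.X * (peirceAux R i u + peirceAux R i v) := rfl

@[simp] lemma peirceAux_of (i j : T) :
    peirceAux R i (FreeMagma.of j) = if j = i then 1 else 0 := rfl

/-- The number of occurrences of the variable `i` in a nonassociative word. -/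
def countAux (i : T) : FreeMagma T → ℕ
  | .of j => if j = i then 1 else 0
  | .mul u v => countAux i u + countAux i v

@[simp] lemma countAux_mul (i : T) (u v : FreeMagma T) :
    countAux i (u * v) = countAux i u + countAux i v := rfl

lemma peirceAux_respects (i : T) {a b : FreeMagma T} (h : CommRel T a b) :
    peirceAux R i a = peirceAux R i b := by
  induction h with
  | comm a b => simp [add_comm]
  | mul_left c h ih => simp [ih]
  | mul_right c h ih => simp [ih]

lemma countAux_respects (i : T) {a b : FreeMagma T} (h : CommRel T a b) :
    countAux i a = countAux i b := by
  induction h with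
  | comm a b => simp [Nat.add_comm]
  | mul_left c h ih => simp [ih]
  | mul_right c h ih => simp [ih]

/-- The Peirce polynomial `∂ᵢ(w)` of a commutative nonassociative monomial `w`,
determined by `∂ᵢ(tᵢ) = 1`, `∂ᵢ(tⱼ) = 0` for `j ≠ i`, and
`∂ᵢ(u·v) = X·(∂ᵢ(u) + ∂ᵢ(v))`. -/
noncomputable def FreeCommMagma.peirce (i : T) : FreeCommMagma T → Polynomial R :=
  Quot.lift (peirceAux R i) fun _ _ h => peirceAux_respects R i h

/-- The number of occurrences (degree) of the variable `i` in a commutative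
nonassociative monomial. -/
def FreeCommMagma.count (i : T) : FreeCommMagma T → ℕ :=
  Quot.lift (countAux i) fun _ _ h => countAux_respects i h

end Peirce

/-- Principal powers of an element of a magma: `ppow a n = a^(n+1)`,
i.e. `ppow a 0 = a` and `ppow a (n+1) = a * (ppow a n)`. -/
def ppow {M : Type v} [Mul M] (a : M) : ℕ → M
  | 0 => a
  | n + 1 => a * ppow a n

/-- Iterated left multiplication: `lpow a r g = a^{{r}} g`, i.e. `lpow a 0 g = g` and
`lpow a (r+1) g = a * (lpow a r g)`. -/
def lpow {M : Type v} [Mul M] (a : M) : ℕ → M → M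
  | 0, g => g
  | r + 1, g => a * lpow a r g

section Algebra

variable (K : Type v) [Field K]

/-- A commutative nonassociative monomial, viewed as an element of the free
commutative nonassociative algebra `K(T)` (realized as the magma algebra of the
free commutative magma). -/
noncomputable def mono (w : FreeCommMagma T) : MonoidAlgebra K (FreeCommMagma T) :=
  MonoidAlgebra.single w 1

/-- The augmentation (sum of the coefficients) of an element of the free
commutative nonassociative algebra. -/
noncomputable def aug : MonoidAlgebra K (FreeCommMagma T) →ₗ[K] K :=
  (Finsupp.lsum K fun _ => LinearMap.id).comp (MonoidAlgebra.coeffLinearEquiv K).toLinearMap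

/-- The Peirce polynomial `∂ᵢ : K(T) → K[X]`, the `K`-linear map determined on
monomials by `∂ᵢ(tᵢ) = 1`, `∂ᵢ(tⱼ) = 0` for `j ≠ i`, and `∂ᵢ(u·v) = X·(∂ᵢ(u) + ∂ᵢ(v))`. -/
noncomputable def Dp [DecidableEq T] (i : T) :
    MonoidAlgebra K (FreeCommMagma T) →ₗ[K] Polynomial K :=
  (Finsupp.lsum K fun w => LinearMap.toSpanSingleton K (Polynomial K)
    (FreeCommMagma.peirce K i w)).comp (MonoidAlgebra.coeffLinearEquiv K).toLinearMap

/-- The free commutative nonassociative algebra is commutative. -/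
lemma fca_mul_comm (f g : MonoidAlgebra K (FreeCommMagma T)) : f * g = g * f := by
  rw [MonoidAlgebra.mul_def, MonoidAlgebra.mul_def, Finsupp.sum_comm]
  refine Finsupp.sum_congr fun a _ => Finsupp.sum_congr fun c _ => ?_
  rw [FreeCommMagma.mul_comm, mul_comm (f.coeff c) (g.coeff a)]

end Algebra

section Subst

variable (K : Type v) [Field K] {A : Type*} [Mul A]

/-- Evaluation of a nonassociative word under a substitution of the variables. -/
def evalAux (ρ : T → A) : FreeMagma T → A
  | .of t => ρ t
  | .mul u v => evalAux ρ u * evalAux ρ v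

@[simp] lemma evalAux_mul (ρ : T → A) (u v : FreeMagma T) :
    evalAux ρ (u * v) = evalAux ρ u * evalAux ρ v := rfl

/-- Evaluation of a commutative nonassociative monomial in a commutative magma
under a substitution of the variables. -/
def FreeCommMagma.eval (hA : ∀ a b : A, a * b = b * a) (ρ : T → A) :
    FreeCommMagma T → A :=
  Quot.lift (evalAux ρ) (by
    intro a b h
    induction h with
    | comm a b => exact hA _ _
    | mul_left c h ih => simp [ih]
    | mul_right c h ih => simp [ih])

/-- The substitution homomorphism `ρ̂ : K(T) → A` extending a substitution
`ρ : T → A` of the variables, for `A` a commutative nonassociative `K`-algebra. -/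
noncomputable def subst [AddCommMonoid A] [Module K A]
    (hA : ∀ a b : A, a * b = b * a) (ρ : T → A)
    (f : MonoidAlgebra K (FreeCommMagma T)) : A :=
  f.coeff.sum fun w c => c • FreeCommMagma.eval hA ρ w

end Subst

/-- The list of the leaves of a nonassociative word (a rooted binary tree with
leaves labeled by the variables), together with their heights. -/
def leaves : FreeMagma T → List (T × ℕ)
  | .of t => [(t, 0)]
  | .mul u v => (leaves u ++ leaves v).map fun p => (p.1, p.2 + 1)

end Evanescent
universe u₉

open Evanescent in
/-- Any subset `P ⊆ K` containing `1` is the Peirce spectrum (the set of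
eigenvalues of `L_e`) of some mutation algebra with an idempotent `e` of weight `1`. -/
theorem exists_mutation_algebra_with_spectrum
    {K : Type u₉} [Field K] (hchar : (2 : K) ≠ 0)
    (P : Set K) (hP : (1 : K) ∈ P) :
    ∃ (A : Type u₉) (_ : AddCommGroup A) (_ : Module K A)
      (M : A →ₗ[K] A) (ω : A →ₗ[K] K),
      ω ≠ 0 ∧ (∀ x, ω (M x) = ω x) ∧
      ∃ e : A, e ≠ 0 ∧ ω e = 1 ∧
        (2 : K)⁻¹ • (ω e • M e + ω e • M e) = e ∧
        ∀ lam : K, lam ∈ P ↔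
          ∃ v : A, v ≠ 0 ∧ (2 : K)⁻¹ • (ω v • M e + ω e • M v) = lam • v := by
  classical
  let D : (↥P →₀ K) →ₗ[K] (↥P →₀ K) :=
    Finsupp.lsum K fun p => (2 * (p : K)) • Finsupp.lsingle p
  have hD : ∀ (f : ↥P →₀ K) (q : ↥P), D f q = 2 * (q : K) * f q := by
    intro f q
    simp only [D, Finsupp.lsum_apply, Finsupp.sum_apply]
    rw [Finsupp.sum_eq_single q]
    · simp [Finsupp.lsingle_apply, mul_comm]
    · intro p _ hpq
      simp [Finsupp.lsingle_apply, Finsupp.single_apply, hpq]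
    · intro h
      simp [h]
  refine ⟨K × (↥P →₀ K), inferInstance, inferInstance,
    LinearMap.prodMap LinearMap.id D, LinearMap.fst K K _, ?_, ?_, (1, 0),
    ?_, rfl, ?_, ?_⟩
  · intro h
    have : ((1 : K), (0 : ↥P →₀ K)).1 = 0 := congrArg (fun φ => φ (1, 0)) h
    exact one_ne_zero this
  · intro x; rfl
  · intro h
    exact one_ne_zero (congrArg Prod.fst h)
  · have hD0 : D 0 = 0 := map_zero D
    simp only [LinearMap.fst_apply, LinearMap.prodMap_apply, LinearMap.id_apply,
      hD0, one_smul, Prod.smul_mk, Prod.mk_add_mk, smul_eq_mul]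
    rw [show (1 : K) + 1 = 2 from one_add_one_eq_two, inv_mul_cancel₀ hchar]
    simp
  · intro lam
    constructor
    · intro hlam
      refine ⟨(0, Finsupp.single ⟨lam, hlam⟩ 1), ?_, ?_⟩
      · intro h
        have h2 : Finsupp.single (⟨lam, hlam⟩ : ↥P) (1 : K) = 0 :=
          congrArg Prod.snd h
        exact one_ne_zero (Finsupp.single_eq_zero.mp h2)
      · have hDs : D (Finsupp.single ⟨lam, hlam⟩ 1) =
            Finsupp.single ⟨lam, hlam⟩ (2 * lam) := by
          ext q
          rw [hD, Finsupp.single_apply, Finsupp.single_apply]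
          by_cases h : (⟨lam, hlam⟩ : ↥P) = q
          · subst h; simp
          · simp [h]
        simp only [LinearMap.fst_apply, LinearMap.prodMap_apply, LinearMap.id_apply,
          hDs, zero_smul, one_smul, zero_add, Prod.smul_mk, Prod.mk_add_mk,
          map_zero]
        refine Prod.ext (by simp) ?_
        simp only [zero_add]
        rw [Finsupp.smul_single, Finsupp.smul_single]
        congr 1
        rw [smul_eq_mul, smul_eq_mul, ← mul_assoc, inv_mul_cancel₀ hchar, one_mul,
          mul_one]
    · rintro ⟨⟨a, f⟩, hv, heq⟩
      have hfst : a = lam * a := by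
        have := congrArg Prod.fst heq
        simp only [LinearMap.fst_apply, LinearMap.prodMap_apply, LinearMap.id_apply,
          Prod.smul_mk, Prod.mk_add_mk, smul_eq_mul, Prod.fst] at this
        rw [← this]
        rw [mul_one, one_mul, ← two_mul, ← mul_assoc, inv_mul_cancel₀ hchar, one_mul]
      have hsnd : ∀ q : ↥P, (q : K) * f q = lam * f q := by
        intro q
        have := congrArg Prod.snd heq
        simp only [LinearMap.fst_apply, LinearMap.prodMap_apply, LinearMap.id_apply,
          Prod.smul_mk, Prod.mk_add_mk, map_zero, one_smul] at this
        have h2 := congrArg (fun g : ↥P →₀ K => g q) this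
        simp only [Finsupp.coe_smul, Finsupp.coe_add, Pi.smul_apply, Pi.add_apply,
          smul_eq_mul, Finsupp.coe_zero, Pi.zero_apply, mul_zero, zero_add,
          hD] at h2
        rw [← h2, ← mul_assoc, ← mul_assoc, inv_mul_cancel₀ hchar, one_mul]
      by_cases ha : a = 0
      · have hf : f ≠ 0 := by
          intro hf0
          exact hv (by simp [ha, hf0])
        obtain ⟨q, hq⟩ := Finsupp.ne_iff.mp hf
        simp only [Finsupp.coe_zero, Pi.zero_apply] at hq
        have := hsnd q
        have hql : (q : K) = lam := by
          exact mul_right_cancel₀ hq this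
        rw [← hql]; exact q.2
      · have : lam = 1 := by
          rcases mul_eq_mul_right_iff.mp (by rw [← hfst, one_mul] : lam * a = 1 * a)
            with h | h
          · exact h
          · exact absurd h ha
        rw [this]; exact hP
end

section
/- In K(x,y,z): (i) if f is a K-linear combination of the monomials x·(y·z), (x·y)·z, (x·z)·y, x·y, x·z, y·z and ∂_x(f) = ∂_y(f) = ∂_z(f) = 0, then f = 0 (there is no train Peirce-evanescent identity of degree (1,1,1)); (ii) for every n ≥ 2 and every commutative nonassociative monomial w of multidegree (n,1,1) in (x,y,z) that is not of any of the forms x^{{r}}((x·y)·z), x^{{r}}((x·z)·y), x^{{r}}(y·z) (r ≥ 0), there exists a unique element P_w of the K-linear span of {x^{{k}}((x·y)·z) : 0 ≤ k ≤ n−1} ∪ {x^{{k}}((x·z)·y) : 0 ≤ k ≤ n−1} ∪ {x^{{k}}(y·z) : 0 ≤ k ≤ n} such that ε(P_w) = 1 and ∂_x(w − P_w) = ∂_y(w − P_w) = ∂_z(w − P_w) = 0; consequently w − P_w is a Peirce-evanescent identity. -/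
namespace Evanescent

/-- The variable `x` of `K(x,y,z)`. -/
def x3 : FreeCommMagma (Fin 3) := FreeCommMagma.of 0

/-- The variable `y` of `K(x,y,z)`. -/
def y3 : FreeCommMagma (Fin 3) := FreeCommMagma.of 1

/-- The variable `z` of `K(x,y,z)`. -/
def z3 : FreeCommMagma (Fin 3) := FreeCommMagma.of 2

/-- The span of `{x^{{k}}((x·y)·z) : 0 ≤ k ≤ n−1} ∪ {x^{{k}}((x·z)·y) : 0 ≤ k ≤ n−1}
∪ {x^{{k}}(y·z) : 0 ≤ k ≤ n}` in `K(x,y,z)`. -/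
noncomputable def trainSpan3 (K : Type*) [Field K] (n : ℕ) :
    Submodule K (MonoidAlgebra K (FreeCommMagma (Fin 3))) :=
  Submodule.span K
    (((fun k => mono K (lpow x3 k ((x3 * y3) * z3))) '' Set.Iic (n - 1)) ∪
     ((fun k => mono K (lpow x3 k ((x3 * z3) * y3))) '' Set.Iic (n - 1)) ∪
     ((fun k => mono K (lpow x3 k (y3 * z3))) '' Set.Iic n))

end Evanescent
namespace Evanescent
open Polynomial

variable {K : Type*} [Field K]

@[simp] lemma Dp_mono (i : Fin 3) (w : FreeCommMagma (Fin 3)) :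
    Dp K i (mono K w) = FreeCommMagma.peirce K i w := by
  rw [Dp, mono, LinearMap.comp_apply]
  change (Finsupp.lsum K _) (Finsupp.single w (1:K)) = _
  rw [Finsupp.lsum_single]; simp

@[simp] lemma aug_mono (w : FreeCommMagma (Fin 3)) : aug K (mono K w) = 1 := by
  rw [aug, mono, LinearMap.comp_apply]
  change (Finsupp.lsum K _) (Finsupp.single w (1:K)) = _
  rw [Finsupp.lsum_single]; rfl

lemma peirce_mul (i : Fin 3) (a b : FreeCommMagma (Fin 3)) :
    FreeCommMagma.peirce K i (a * b)
      = X * (FreeCommMagma.peirce K i a + FreeCommMagma.peirce K i b) := by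
  induction a using Quot.ind
  induction b using Quot.ind
  rfl

@[simp] lemma peirce_of (i j : Fin 3) :
    FreeCommMagma.peirce K i (FreeCommMagma.of j) = if j = i then 1 else 0 := rfl

/-- total number of leaves -/
def sizeL (u : FreeMagma (Fin 3)) : ℕ := countAux 0 u + countAux 1 u + countAux 2 u

@[simp] lemma sizeL_of (j : Fin 3) : sizeL (.of j) = 1 := by
  fin_cases j <;> simp [sizeL, countAux]

@[simp] lemma sizeL_mul (u v : FreeMagma (Fin 3)) : sizeL (u * v) = sizeL u + sizeL v := by
  show sizeL (FreeMagma.mul u v) = _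
  simp [sizeL, countAux]; ring

lemma sizeL_pos (u : FreeMagma (Fin 3)) : 1 ≤ sizeL u := by
  induction u with
  | ih1 j => simp
  | ih2 u v ihu ihv => simp; omega

lemma natDegree_peirceAux_le (i : Fin 3) (u : FreeMagma (Fin 3)) :
    (peirceAux K i u).natDegree + 1 ≤ sizeL u := by
  induction u with
  | ih1 j => simp [peirceAux]; split <;> simp
  | ih2 u v ihu ihv =>
      have h1 := sizeL_pos u
      have h2 := sizeL_pos v
      have : (peirceAux K i (u * v)).natDegree ≤
          1 + max (peirceAux K i u).natDegree (peirceAux K i v).natDegree := by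
        rw [peirceAux_mul]
        refine le_trans (natDegree_mul_le) ?_
        have := natDegree_add_le (peirceAux K i u) (peirceAux K i v)
        simp [natDegree_X]
        omega
      simp only [sizeL_mul]
      omega

lemma peirceAux_zero {i : Fin 3} {u : FreeMagma (Fin 3)} (h : countAux i u = 0) :
    peirceAux K i u = 0 := by
  induction u with
  | ih1 j =>
      simp [countAux] at h
      simp [peirceAux, h]
  | ih2 u v ihu ihv =>
      simp [countAux] at h
      rw [peirceAux_mul, ihu h.1, ihv h.2]
      simp

lemma peirceAux_single {i : Fin 3} {u : FreeMagma (Fin 3)} (h : countAux i u = 1) :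
    ∃ p : ℕ, peirceAux K i u = X ^ p := by
  induction u with
  | ih1 j =>
      simp [countAux] at h
      exact ⟨0, by simp [peirceAux, h]⟩
  | ih2 u v ihu ihv =>
      have h' : countAux i u + countAux i v = 1 := h
      rcases Nat.le_one_iff_eq_zero_or_eq_one.mp (le_of_eq rfl) with _ | _
      all_goals {
        rcases Nat.eq_zero_or_pos (countAux i u) with h0 | h1
        · have hv : countAux i v = 1 := by omega
          obtain ⟨p, hp⟩ := ihv hv
          exact ⟨p + 1, by rw [peirceAux_mul, peirceAux_zero h0, hp]; ring⟩
        · have hu : countAux i u = 1 := by omega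
          have hv : countAux i v = 0 := by omega
          obtain ⟨p, hp⟩ := ihu hu
          exact ⟨p + 1, by rw [peirceAux_mul, peirceAux_zero hv, hp]; ring⟩ }

lemma kraft (hchar : (2 : K) ≠ 0) (u : FreeMagma (Fin 3)) :
    ∑ i : Fin 3, (peirceAux K i u).eval 2⁻¹ = 1 := by
  induction u with
  | ih1 j => fin_cases j <;> simp [peirceAux, Fin.sum_univ_three]
  | ih2 u v ihu ihv =>
      simp only [peirceAux_mul, eval_mul, eval_add, eval_X, Fin.sum_univ_three] at *
      linear_combination (2:K)⁻¹ * ihu + (2:K)⁻¹ * ihv + mul_inv_cancel₀ hchar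

end Evanescent
namespace Evanescent
open Polynomial

variable {K : Type*} [Field K]

/-- `X + X² + ⋯ + X^k` -/
noncomputable def Sk (K : Type*) [Field K] (k : ℕ) : Polynomial K :=
  ∑ j ∈ Finset.range k, X ^ (j + 1)

lemma Sk_mul (k : ℕ) : (X - 1) * Sk K k = X ^ (k + 1) - X := by
  induction k with
  | zero => simp [Sk]
  | succ k ih =>
      rw [Sk, Finset.sum_range_succ, ← Sk, mul_add, ih]
      ring

lemma Sk_succ (k : ℕ) : Sk K (k + 1) = X + X * Sk K k := by
  rw [Sk, Finset.sum_range_succ', Sk, Finset.mul_sum]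
  simp [pow_succ]
  ring_nf

@[simp] lemma peirce_u1_0 : FreeCommMagma.peirce K 0 ((x3 * y3) * z3) = X ^ 2 := by
  simp [peirce_mul, x3, y3, z3]; ring
@[simp] lemma peirce_u1_1 : FreeCommMagma.peirce K 1 ((x3 * y3) * z3) = X ^ 2 := by
  simp [peirce_mul, x3, y3, z3]; ring
@[simp] lemma peirce_u1_2 : FreeCommMagma.peirce K 2 ((x3 * y3) * z3) = X := by
  simp [peirce_mul, x3, y3, z3]
@[simp] lemma peirce_u2_0 : FreeCommMagma.peirce K 0 ((x3 * z3) * y3) = X ^ 2 := by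
  simp [peirce_mul, x3, y3, z3]; ring
@[simp] lemma peirce_u2_1 : FreeCommMagma.peirce K 1 ((x3 * z3) * y3) = X := by
  simp [peirce_mul, x3, y3, z3]
@[simp] lemma peirce_u2_2 : FreeCommMagma.peirce K 2 ((x3 * z3) * y3) = X ^ 2 := by
  simp [peirce_mul, x3, y3, z3]; ring
@[simp] lemma peirce_u3_0 : FreeCommMagma.peirce K 0 (y3 * z3) = 0 := by
  simp [peirce_mul, x3, y3, z3]
@[simp] lemma peirce_u3_1 : FreeCommMagma.peirce K 1 (y3 * z3) = X := by
  simp [peirce_mul, x3, y3, z3]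
@[simp] lemma peirce_u3_2 : FreeCommMagma.peirce K 2 (y3 * z3) = X := by
  simp [peirce_mul, x3, y3, z3]

lemma peirce_lpow0 (k : ℕ) (u : FreeCommMagma (Fin 3)) :
    FreeCommMagma.peirce K 0 (lpow x3 k u) = Sk K k + X ^ k * FreeCommMagma.peirce K 0 u := by
  induction k with
  | zero => simp [lpow, Sk]
  | succ k ih =>
      show FreeCommMagma.peirce K 0 (x3 * lpow x3 k u) = _
      rw [peirce_mul, ih, Sk_succ]
      simp [x3]
      ring

lemma peirce_lpow' (i : Fin 3) (hi : FreeCommMagma.peirce K i x3 = 0) (k : ℕ)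
    (u : FreeCommMagma (Fin 3)) :
    FreeCommMagma.peirce K i (lpow x3 k u) = X ^ k * FreeCommMagma.peirce K i u := by
  induction k with
  | zero => simp [lpow]
  | succ k ih =>
      show FreeCommMagma.peirce K i (x3 * lpow x3 k u) = _
      rw [peirce_mul, ih, hi]
      ring

lemma peirce_x3_1 : FreeCommMagma.peirce K 1 x3 = 0 := by simp [x3]
lemma peirce_x3_2 : FreeCommMagma.peirce K 2 x3 = 0 := by simp [x3]

/-- the generic element of the train span with coefficient polynomials `B`, `C`, `G` -/
noncomputable def comb (K : Type*) [Field K] (n : ℕ) (B C G : Polynomial K) :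
    MonoidAlgebra K (FreeCommMagma (Fin 3)) :=
  (∑ k ∈ Finset.range n, B.coeff k • mono K (lpow x3 k ((x3 * y3) * z3)))
  + (∑ k ∈ Finset.range n, C.coeff k • mono K (lpow x3 k ((x3 * z3) * y3)))
  + (∑ k ∈ Finset.range (n + 1), G.coeff k • mono K (lpow x3 k (y3 * z3)))

lemma comb_mem (n : ℕ) (B C G : Polynomial K) : comb K n B C G ∈ trainSpan3 K n := by
  refine Submodule.add_mem _ (Submodule.add_mem _ ?_ ?_) ?_ <;>
    refine Submodule.sum_mem _ fun k hk => Submodule.smul_mem _ _ (Submodule.subset_span ?_) <;>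
    simp only [Finset.mem_range] at hk
  · exact Or.inl (Or.inl ⟨k, Set.mem_Iic.mpr (by omega), rfl⟩)
  · exact Or.inl (Or.inr ⟨k, Set.mem_Iic.mpr (by omega), rfl⟩)
  · exact Or.inr ⟨k, Set.mem_Iic.mpr (by omega), rfl⟩

lemma sum_coeff {P : Polynomial K} {m : ℕ} (h : P.natDegree < m) :
    ∑ k ∈ Finset.range m, P.coeff k • (X : Polynomial K) ^ k = P := by
  conv_rhs => rw [P.as_sum_range' m h]
  exact Finset.sum_congr rfl fun k _ => smul_X_eq_monomial

lemma sum_coeff_eval_one {P : Polynomial K} {m : ℕ} (h : P.natDegree < m) :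
    ∑ k ∈ Finset.range m, P.coeff k = P.eval 1 := by
  rw [eval_eq_sum_range' h]
  simp

lemma skSum {P : Polynomial K} {m : ℕ} (h : P.natDegree < m) :
    (X - 1) * ∑ k ∈ Finset.range m, P.coeff k • Sk K k
      = X * P - Polynomial.C (P.eval 1) * X := by
  rw [Finset.mul_sum]
  have h1 : ∀ k, (X - 1) * (P.coeff k • Sk K k) = P.coeff k • (X ^ (k + 1) - X) := fun k => by
    rw [mul_smul_comm, Sk_mul]
  simp only [h1, smul_sub]
  rw [Finset.sum_sub_distrib, ← Finset.sum_smul, sum_coeff_eval_one h]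
  have h2 : ∀ k ∈ Finset.range m, P.coeff k • (X : Polynomial K) ^ (k + 1)
      = X * (P.coeff k • X ^ k) := fun k _ => by rw [mul_smul_comm]; ring_nf
  rw [Finset.sum_congr rfl h2, ← Finset.mul_sum, sum_coeff h, smul_eq_C_mul]

end Evanescent
namespace Evanescent
open Polynomial

variable {K : Type*} [Field K]

lemma Dp_comb1 {n : ℕ} {B C G : Polynomial K} (hB : B.natDegree < n) (hC : C.natDegree < n)
    (hG : G.natDegree < n + 1) :
    Dp K 1 (comb K n B C G) = X ^ 2 * B + X * C + X * G := by
  have e1 : ∀ k : ℕ, FreeCommMagma.peirce K 1 (lpow x3 k ((x3 * y3) * z3))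
      = X ^ 2 * X ^ k := fun k => by rw [peirce_lpow' 1 peirce_x3_1]; rw [peirce_u1_1]; ring
  have e2 : ∀ k : ℕ, FreeCommMagma.peirce K 1 (lpow x3 k ((x3 * z3) * y3))
      = X * X ^ k := fun k => by rw [peirce_lpow' 1 peirce_x3_1]; rw [peirce_u2_1]; ring
  have e3 : ∀ k : ℕ, FreeCommMagma.peirce K 1 (lpow x3 k (y3 * z3))
      = X * X ^ k := fun k => by rw [peirce_lpow' 1 peirce_x3_1]; rw [peirce_u3_1]; ring
  have hsw : ∀ (c : K) (p q : Polynomial K), c • (p * q) = p * (c • q) := fun c p q =>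
    (mul_smul_comm c p q).symm
  simp only [comb, map_add, map_sum, map_smul, Dp_mono, e1, e2, e3, hsw, ← Finset.mul_sum,
    sum_coeff hB, sum_coeff hC, sum_coeff hG]

lemma Dp_comb2 {n : ℕ} {B C G : Polynomial K} (hB : B.natDegree < n) (hC : C.natDegree < n)
    (hG : G.natDegree < n + 1) :
    Dp K 2 (comb K n B C G) = X * B + X ^ 2 * C + X * G := by
  have e1 : ∀ k : ℕ, FreeCommMagma.peirce K 2 (lpow x3 k ((x3 * y3) * z3))
      = X * X ^ k := fun k => by rw [peirce_lpow' 2 peirce_x3_2]; rw [peirce_u1_2]; ring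
  have e2 : ∀ k : ℕ, FreeCommMagma.peirce K 2 (lpow x3 k ((x3 * z3) * y3))
      = X ^ 2 * X ^ k := fun k => by rw [peirce_lpow' 2 peirce_x3_2]; rw [peirce_u2_2]; ring
  have e3 : ∀ k : ℕ, FreeCommMagma.peirce K 2 (lpow x3 k (y3 * z3))
      = X * X ^ k := fun k => by rw [peirce_lpow' 2 peirce_x3_2]; rw [peirce_u3_2]; ring
  have hsw : ∀ (c : K) (p q : Polynomial K), c • (p * q) = p * (c • q) := fun c p q =>
    (mul_smul_comm c p q).symm
  simp only [comb, map_add, map_sum, map_smul, Dp_mono, e1, e2, e3, hsw, ← Finset.mul_sum,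
    sum_coeff hB, sum_coeff hC, sum_coeff hG]

lemma Dp_comb0 {n : ℕ} {B C G : Polynomial K} (hB : B.natDegree < n) (hC : C.natDegree < n)
    (hG : G.natDegree < n + 1) :
    (X - 1) * Dp K 0 (comb K n B C G)
      = X * (B + C + G) - Polynomial.C ((B + C + G).eval 1) * X
        + (X - 1) * (X ^ 2 * (B + C)) := by
  have e1 : ∀ k : ℕ, FreeCommMagma.peirce K 0 (lpow x3 k ((x3 * y3) * z3))
      = Sk K k + X ^ 2 * X ^ k := fun k => by rw [peirce_lpow0, peirce_u1_0]; ring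
  have e2 : ∀ k : ℕ, FreeCommMagma.peirce K 0 (lpow x3 k ((x3 * z3) * y3))
      = Sk K k + X ^ 2 * X ^ k := fun k => by rw [peirce_lpow0, peirce_u2_0]; ring
  have e3 : ∀ k : ℕ, FreeCommMagma.peirce K 0 (lpow x3 k (y3 * z3))
      = Sk K k := fun k => by rw [peirce_lpow0, peirce_u3_0]; ring
  have hsw : ∀ (c : K) (p q : Polynomial K), c • (p * q) = p * (c • q) := fun c p q =>
    (mul_smul_comm c p q).symm
  simp only [comb, map_add, map_sum, map_smul, Dp_mono, e1, e2, e3, smul_add,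
    Finset.sum_add_distrib]
  simp only [hsw, ← Finset.mul_sum, sum_coeff hB, sum_coeff hC]
  simp only [eval_add, map_add]
  linear_combination skSum hB + skSum hC + skSum hG

lemma aug_comb {n : ℕ} {B C G : Polynomial K} (hB : B.natDegree < n) (hC : C.natDegree < n)
    (hG : G.natDegree < n + 1) :
    aug K (comb K n B C G) = B.eval 1 + C.eval 1 + G.eval 1 := by
  simp only [comb, map_add, map_sum, map_smul, aug_mono, smul_eq_mul, mul_one,
    sum_coeff_eval_one hB, sum_coeff_eval_one hC, sum_coeff_eval_one hG]

end Evanescent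
namespace Evanescent
open Polynomial

variable {K : Type*} [Field K]

lemma comb_single1 {n k : ℕ} (hk : k < n) :
    comb K n (X ^ k) 0 0 = mono K (lpow x3 k ((x3 * y3) * z3)) := by
  simp [comb, coeff_X_pow, ite_smul, Finset.sum_ite_eq, hk]

lemma comb_single2 {n k : ℕ} (hk : k < n) :
    comb K n 0 (X ^ k) 0 = mono K (lpow x3 k ((x3 * z3) * y3)) := by
  simp [comb, coeff_X_pow, ite_smul, Finset.sum_ite_eq, hk]

lemma comb_single3 {n k : ℕ} (hk : k < n + 1) :
    comb K n 0 0 (X ^ k) = mono K (lpow x3 k (y3 * z3)) := by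
  simp [comb, coeff_X_pow, ite_smul, Finset.sum_ite_eq, hk]

lemma mem_span_comb {n : ℕ} (hn : 1 ≤ n) {Q : MonoidAlgebra K (FreeCommMagma (Fin 3))}
    (hQ : Q ∈ trainSpan3 K n) :
    ∃ B C G : Polynomial K, B.natDegree < n ∧ C.natDegree < n ∧ G.natDegree < n + 1 ∧
      Q = comb K n B C G := by
  rw [trainSpan3] at hQ
  induction hQ using Submodule.span_induction with
  | mem v hv =>
      rcases hv with (⟨k, hk, rfl⟩ | ⟨k, hk, rfl⟩) | ⟨k, hk, rfl⟩
      · have hk' : k < n := by simp only [Set.mem_Iic] at hk; omega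
        exact ⟨X ^ k, 0, 0, by simp only [natDegree_X_pow]; omega,
          by simp only [natDegree_zero]; omega, by simp only [natDegree_zero]; omega,
          (comb_single1 hk').symm⟩
      · have hk' : k < n := by simp only [Set.mem_Iic] at hk; omega
        exact ⟨0, X ^ k, 0, by simp only [natDegree_zero]; omega,
          by simp only [natDegree_X_pow]; omega, by simp only [natDegree_zero]; omega,
          (comb_single2 hk').symm⟩
      · have hk' : k < n + 1 := by simp only [Set.mem_Iic] at hk; omega
        exact ⟨0, 0, X ^ k, by simp only [natDegree_zero]; omega,
          by simp only [natDegree_zero]; omega, by simp only [natDegree_X_pow]; omega,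
          (comb_single3 hk').symm⟩
  | zero => exact ⟨0, 0, 0, by simp only [natDegree_zero]; omega,
      by simp only [natDegree_zero]; omega, by simp only [natDegree_zero]; omega,
      by simp [comb]⟩
  | add a b ha hb iha ihb =>
      obtain ⟨B, C, G, h1, h2, h3, rfl⟩ := iha
      obtain ⟨B', C', G', h1', h2', h3', rfl⟩ := ihb
      refine ⟨B + B', C + C', G + G', ?_, ?_, ?_, ?_⟩
      · exact lt_of_le_of_lt (natDegree_add_le _ _) (max_lt h1 h1')
      · exact lt_of_le_of_lt (natDegree_add_le _ _) (max_lt h2 h2')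
      · exact lt_of_le_of_lt (natDegree_add_le _ _) (max_lt h3 h3')
      · simp [comb, coeff_add, add_smul, Finset.sum_add_distrib]; abel
  | smul a v hv ihv =>
      obtain ⟨B, C, G, h1, h2, h3, rfl⟩ := ihv
      refine ⟨a • B, a • C, a • G, ?_, ?_, ?_, ?_⟩
      · exact lt_of_le_of_lt (natDegree_smul_le _ _) h1
      · exact lt_of_le_of_lt (natDegree_smul_le _ _) h2
      · exact lt_of_le_of_lt (natDegree_smul_le _ _) h3
      · simp [comb, coeff_smul, smul_smul, Finset.smul_sum, smul_add]

lemma span_dp_zero (hchar : (2 : K) ≠ 0) {n : ℕ} (hn : 1 ≤ n)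
    {Q : MonoidAlgebra K (FreeCommMagma (Fin 3))} (hQ : Q ∈ trainSpan3 K n)
    (h : ∀ i : Fin 3, Dp K i Q = 0) : Q = 0 := by
  obtain ⟨B, C, G, hB, hC, hG, rfl⟩ := mem_span_comb hn hQ
  have hX : (X : Polynomial K) ≠ 0 := X_ne_zero
  have hX1 : (X - 1 : Polynomial K) ≠ 0 := by
    simpa using X_sub_C_ne_zero (1 : K)
  have h2X : (2 * X - 1 : Polynomial K) ≠ 0 := by
    intro hh
    apply hchar
    have := congrArg (fun p => Polynomial.coeff p 1) hh
    simpa [← map_ofNat (Polynomial.C : K →+* Polynomial K) 2, coeff_C_mul, coeff_sub,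
      coeff_one] using this
  have e1 : X ^ 2 * B + X * C + X * G = 0 := (Dp_comb1 hB hC hG).symm.trans (h 1)
  have e2 : X * B + X ^ 2 * C + X * G = 0 := (Dp_comb2 hB hC hG).symm.trans (h 2)
  have e0 : X * (B + C + G) - Polynomial.C ((B + C + G).eval 1) * X
      + (X - 1) * (X ^ 2 * (B + C)) = 0 := by
    rw [← Dp_comb0 hB hC hG, h 0, mul_zero]
  have hCB : C = B := by
    have h12 : (B - C) * (X * (X - 1)) = 0 := by linear_combination e1 - e2
    rcases mul_eq_zero.mp h12 with h' | h'
    · exact (sub_eq_zero.mp h').symm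
    · rcases mul_eq_zero.mp h' with h'' | h'' <;> [exact absurd h'' hX; exact absurd h'' hX1]
  have hGB : G = -((X + 1) * B) := by
    have hp : X * (G + (X + 1) * B) = 0 := by linear_combination e1 - X * hCB
    rcases mul_eq_zero.mp hp with h' | h'
    · exact absurd h' hX
    · linear_combination h'
  have heval : ((B + C + G).eval 1 : K) = 0 := by
    rw [hCB, hGB]
    simp only [eval_add, eval_neg, eval_mul, eval_X, eval_one]
    ring
  rw [heval, map_zero, zero_mul, sub_zero] at e0
  have hfin : B * (X * ((X - 1) * (2 * X - 1))) = 0 := by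
    linear_combination e0 - (X ^ 3 - X ^ 2 + X) * hCB - X * hGB
  have hB0 : B = 0 := by
    rcases mul_eq_zero.mp hfin with h' | h'
    · exact h'
    · exfalso
      rcases mul_eq_zero.mp h' with h'' | h''
      · exact hX h''
      · rcases mul_eq_zero.mp h'' with h3 | h3 <;> [exact hX1 h3; exact h2X h3]
  have hC0 : C = 0 := by rw [hCB, hB0]
  have hG0 : G = 0 := by rw [hGB, hB0]; ring
  rw [hB0, hC0, hG0]
  simp [comb]

end Evanescent
namespace Evanescent
open Polynomial

variable {K : Type*} [Field K]

lemma natDegree_Sk_le (m : ℕ) : (Sk K m).natDegree ≤ m := by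
  refine natDegree_sum_le_of_forall_le _ _ fun j hj => ?_
  simp only [Finset.mem_range] at hj
  simp only [natDegree_X_pow]
  omega

lemma exists_P (hchar : (2 : K) ≠ 0) {n : ℕ} (hn : 2 ≤ n) (u : FreeMagma (Fin 3))
    (h0 : countAux 0 u = n) (h1 : countAux 1 u = 1) (h2 : countAux 2 u = 1)
    (hmul : ∀ j : Fin 3, u ≠ .of j) :
    ∃ P, P ∈ trainSpan3 K n ∧ aug K P = 1 ∧
      ∀ i : Fin 3, Dp K i (mono K (FreeCommMagma.mk u) - P) = 0 := by
  have hti : (2 : K) * 2⁻¹ = 1 := mul_inv_cancel₀ hchar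
  have hCt : (Polynomial.C (2⁻¹ : K)) * 2 = 1 := by
    rw [← map_ofNat (Polynomial.C : K →+* Polynomial K) 2, ← C_mul, inv_mul_cancel₀ hchar,
      C_1]
  have hsize : sizeL u = n + 2 := by rw [sizeL, h0, h1, h2]
  -- the x–Peirce polynomial of w
  set A : Polynomial K := peirceAux K 0 u with hAdef
  have degA : A.natDegree ≤ n + 1 := by
    have := natDegree_peirceAux_le (K := K) 0 u
    rw [← hAdef] at this
    omega
  -- the y– and z–Peirce polynomials are powers of X
  obtain ⟨p, hp⟩ := peirceAux_single (K := K) (i := 1) h1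
  obtain ⟨q, hq⟩ := peirceAux_single (K := K) (i := 2) h2
  clear_value A
  have hcz : ∀ (i : Fin 3), (peirceAux K i u).coeff 0 = 0 := by
    intro i
    cases u with
    | of j => exact absurd rfl (hmul j)
    | mul uu vv =>
        have hrfl : peirceAux K i (uu.mul vv) = X * (peirceAux K i uu + peirceAux K i vv) := rfl
        rw [hrfl, mul_coeff_zero, coeff_X_zero, zero_mul]
  have hA0 : A.coeff 0 = 0 := by rw [hAdef]; exact hcz 0
  have hp1 : 1 ≤ p := by
    by_contra hcon
    have hp0 : p = 0 := by omega
    have := hcz 1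
    rw [hp, hp0, pow_zero] at this
    simp at this
  have hq1 : 1 ≤ q := by
    by_contra hcon
    have hq0 : q = 0 := by omega
    have := hcz 2
    rw [hq, hq0, pow_zero] at this
    simp at this
  have hpn : p ≤ n + 1 := by
    have := natDegree_peirceAux_le (K := K) 1 u
    rw [hp, natDegree_X_pow] at this
    omega
  have hqn : q ≤ n + 1 := by
    have := natDegree_peirceAux_le (K := K) 2 u
    rw [hq, natDegree_X_pow] at this
    omega
  obtain ⟨p', rfl⟩ : ∃ p', p = p' + 1 := ⟨p - 1, by omega⟩
  obtain ⟨q', rfl⟩ : ∃ q', q = q' + 1 := ⟨q - 1, by omega⟩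
  -- Kraft equality
  have hKr : A.eval 2⁻¹ + (2⁻¹ : K) ^ (p' + 1) + (2⁻¹ : K) ^ (q' + 1) = 1 := by
    have := kraft hchar u
    rw [Fin.sum_univ_three, hp, hq, ← hAdef] at this
    simpa using this
  -- the numerator N and its roots
  set N : Polynomial K := A - Polynomial.C (2⁻¹ : K) * (Sk K p' + Sk K q') with hNdef
  have hSk0 : ∀ m : ℕ, (Sk K m).coeff 0 = 0 := by
    intro m
    rw [Sk, finset_sum_coeff]
    refine Finset.sum_eq_zero fun j _ => ?_
    rw [coeff_X_pow]
    simp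
  have hN0 : N.coeff 0 = 0 := by
    rw [hNdef, coeff_sub, hA0, coeff_C_mul, coeff_add, hSk0, hSk0]
    ring
  have hSkeval : ∀ m : ℕ, (Sk K m).eval 2⁻¹ = 1 - 2 * (2⁻¹ : K) ^ (m + 1) := by
    intro m
    have heq := congrArg (eval (2⁻¹ : K)) (Sk_mul (K := K) m)
    simp only [eval_mul, eval_sub, eval_X, eval_one, eval_pow] at heq
    linear_combination (-2 : K) * heq + ((Sk K m).eval 2⁻¹) * hti + hti
  have hNeval : N.eval 2⁻¹ = 0 := by
    rw [hNdef]
    simp only [eval_sub, eval_mul, eval_add, eval_C]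
    rw [hSkeval p', hSkeval q']
    have hAev : A.eval 2⁻¹ = 1 - (2⁻¹ : K) ^ (p' + 1) - (2⁻¹ : K) ^ (q' + 1) := by
      linear_combination hKr
    rw [hAev]
    linear_combination ((2⁻¹:K) ^ (p' + 1) + (2⁻¹:K) ^ (q' + 1) - 1) * hti
  have hcop : IsCoprime (X : Polynomial K) (X - Polynomial.C (2⁻¹ : K)) := by
    refine ⟨Polynomial.C 2, -Polynomial.C 2, ?_⟩
    have : (Polynomial.C (2:K)) * X + (-Polynomial.C 2) * (X - Polynomial.C 2⁻¹)
        = Polynomial.C (2:K) * Polynomial.C 2⁻¹ := by ring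
    rw [this, ← C_mul, mul_inv_cancel₀ hchar, C_1]
  have hdvd : (X * (X - Polynomial.C (2⁻¹ : K))) ∣ N :=
    hcop.mul_dvd (X_dvd_iff.mpr hN0) (dvd_iff_isRoot.mpr hNeval)
  obtain ⟨T, hT⟩ := hdvd
  have degN : N.natDegree ≤ n + 1 := by
    refine le_trans (natDegree_sub_le _ _) ?_
    have hd1 : (Polynomial.C (2⁻¹:K) * (Sk K p' + Sk K q')).natDegree ≤ n := by
      refine le_trans (natDegree_C_mul_le _ _) (le_trans (natDegree_add_le _ _) ?_)
      have := natDegree_Sk_le (K := K) p'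
      have := natDegree_Sk_le (K := K) q'
      omega
    omega
  have degT : T.natDegree < n := by
    by_cases hT0 : T = 0
    · rw [hT0, natDegree_zero]; omega
    · have hfac : (X * (X - Polynomial.C (2⁻¹ : K)) : Polynomial K) ≠ 0 :=
        mul_ne_zero X_ne_zero (X_sub_C_ne_zero _)
      have : N.natDegree = (X * (X - Polynomial.C (2⁻¹ : K))).natDegree + T.natDegree := by
        rw [hT, natDegree_mul hfac hT0]
      have hfd : (X * (X - Polynomial.C (2⁻¹ : K)) : Polynomial K).natDegree = 2 := by
        rw [natDegree_mul X_ne_zero (X_sub_C_ne_zero _), natDegree_X, natDegree_X_sub_C]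
      omega
  have hDdvd : (X - Polynomial.C (1 : K)) ∣ (X ^ p' - X ^ q') :=
    dvd_iff_isRoot.mpr (by simp [IsRoot])
  obtain ⟨D, hD⟩ := hDdvd
  rw [C_1] at hD
  have degD : D.natDegree < n := by
    by_cases hD0 : D = 0
    · rw [hD0, natDegree_zero]; omega
    · have hlhs : (X ^ p' - X ^ q' : Polynomial K).natDegree ≤ n := by
        refine le_trans (natDegree_sub_le _ _) ?_
        simp only [natDegree_X_pow]
        omega
      have hXm1 : (X - 1 : Polynomial K) ≠ 0 := by simpa using X_sub_C_ne_zero (1 : K)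
      have : (X ^ p' - X ^ q' : Polynomial K).natDegree = 1 + D.natDegree := by
        rw [hD, natDegree_mul hXm1 hD0]
        congr 1
        simpa using natDegree_X_sub_C (1 : K)
      omega
  -- the three coefficient polynomials
  set B : Polynomial K := Polynomial.C (2⁻¹ : K) * (T + D) with hBdef
  set Cc : Polynomial K := Polynomial.C (2⁻¹ : K) * (T - D) with hCdef
  set G : Polynomial K := Polynomial.C (2⁻¹ : K) * (X ^ p' + X ^ q' - (X + 1) * T) with hGdef
  have degB : B.natDegree < n := by
    refine lt_of_le_of_lt (le_trans (natDegree_C_mul_le _ _) (natDegree_add_le _ _)) ?_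
    exact max_lt degT degD
  have degC : Cc.natDegree < n := by
    refine lt_of_le_of_lt (le_trans (natDegree_C_mul_le _ _) (natDegree_sub_le _ _)) ?_
    exact max_lt degT degD
  have degG : G.natDegree < n + 1 := by
    refine lt_of_le_of_lt (le_trans (natDegree_C_mul_le _ _) (natDegree_sub_le _ _)) ?_
    have hx1t : ((X + 1) * T : Polynomial K).natDegree ≤ n := by
      refine le_trans natDegree_mul_le ?_
      have : (X + 1 : Polynomial K).natDegree = 1 := by
        simpa using natDegree_X_add_C (1 : K)
      omega
    have hpow : (X ^ p' + X ^ q' : Polynomial K).natDegree ≤ n := by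
      refine le_trans (natDegree_add_le _ _) ?_
      simp only [natDegree_X_pow]
      omega
    omega
  refine ⟨comb K n B Cc G, comb_mem n B Cc G, ?_, ?_⟩
  · rw [aug_comb degB degC degG, hBdef, hCdef, hGdef]
    simp only [eval_mul, eval_add, eval_sub, eval_C, eval_X, eval_pow, eval_one, one_pow]
    linear_combination hti
  · have hpw : ∀ i : Fin 3, FreeCommMagma.peirce K i (FreeCommMagma.mk u)
        = peirceAux K i u := fun i => rfl
    intro i
    fin_cases i
    · -- x
      show Dp K 0 (mono K (FreeCommMagma.mk u) - comb K n B Cc G) = 0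
      rw [map_sub, Dp_mono, sub_eq_zero]
      refine mul_left_cancel₀ (show (X - 1 : Polynomial K) ≠ 0 by
        simpa using X_sub_C_ne_zero (1 : K)) ?_
      rw [Dp_comb0 degB degC degG, hpw, ← hAdef]
      have heval1 : ((B + Cc + G).eval 1 : K) = 1 := by
        rw [hBdef, hCdef, hGdef]
        simp only [eval_mul, eval_add, eval_sub, eval_C, eval_X, eval_pow, eval_one, one_pow]
        linear_combination hti
      rw [heval1, C_1, one_mul]
      have hSp := Sk_mul (K := K) p'
      have hSq := Sk_mul (K := K) q'
      rw [hBdef, hCdef, hGdef]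
      rw [hNdef] at hT
      linear_combination (X - 1) * hT + Polynomial.C (2⁻¹:K) * hSp
        + Polynomial.C (2⁻¹:K) * hSq - (X + (X - 1) * X ^ 2 * T) * hCt
    · -- y
      show Dp K 1 (mono K (FreeCommMagma.mk u) - comb K n B Cc G) = 0
      rw [map_sub, Dp_mono, sub_eq_zero]
      rw [Dp_comb1 degB degC degG, hpw, hp, hBdef, hCdef, hGdef]
      linear_combination (Polynomial.C (2⁻¹:K) * X) * hD - X ^ (p' + 1) * hCt
    · -- z
      show Dp K 2 (mono K (FreeCommMagma.mk u) - comb K n B Cc G) = 0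
      rw [map_sub, Dp_mono, sub_eq_zero]
      rw [Dp_comb2 degB degC degG, hpw, hq, hBdef, hCdef, hGdef]
      linear_combination (-(Polynomial.C (2⁻¹:K) * X)) * hD - X ^ (q' + 1) * hCt

end Evanescent
namespace Evanescent
open Polynomial

variable {K : Type*} [Field K]

@[simp] lemma peirce_v1_0 : FreeCommMagma.peirce K 0 (x3 * (y3 * z3)) = X := by
  simp [peirce_mul, x3, y3, z3]; try ring
@[simp] lemma peirce_v1_1 : FreeCommMagma.peirce K 1 (x3 * (y3 * z3)) = X ^ 2 := by
  simp [peirce_mul, x3, y3, z3]; try ring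
@[simp] lemma peirce_v1_2 : FreeCommMagma.peirce K 2 (x3 * (y3 * z3)) = X ^ 2 := by
  simp [peirce_mul, x3, y3, z3]; try ring
@[simp] lemma peirce_xy_0 : FreeCommMagma.peirce K 0 (x3 * y3) = X := by
  simp [peirce_mul, x3, y3, z3]
@[simp] lemma peirce_xy_1 : FreeCommMagma.peirce K 1 (x3 * y3) = X := by
  simp [peirce_mul, x3, y3, z3]
@[simp] lemma peirce_xy_2 : FreeCommMagma.peirce K 2 (x3 * y3) = 0 := by
  simp [peirce_mul, x3, y3, z3]
@[simp] lemma peirce_xz_0 : FreeCommMagma.peirce K 0 (x3 * z3) = X := by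
  simp [peirce_mul, x3, y3, z3]
@[simp] lemma peirce_xz_1 : FreeCommMagma.peirce K 1 (x3 * z3) = 0 := by
  simp [peirce_mul, x3, y3, z3]
@[simp] lemma peirce_xz_2 : FreeCommMagma.peirce K 2 (x3 * z3) = X := by
  simp [peirce_mul, x3, y3, z3]

lemma mono_ne_span {n : ℕ} (hn : 1 ≤ n) {w : FreeCommMagma (Fin 3)}
    (hr1 : ∀ r : ℕ, w ≠ lpow x3 r ((x3 * y3) * z3))
    (hr2 : ∀ r : ℕ, w ≠ lpow x3 r ((x3 * z3) * y3))
    (hr3 : ∀ r : ℕ, w ≠ lpow x3 r (y3 * z3))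
    {P : MonoidAlgebra K (FreeCommMagma (Fin 3))} (hP : P ∈ trainSpan3 K n) :
    mono K w ≠ P := by
  intro he
  obtain ⟨B, C, G, _, _, _, rfl⟩ := mem_span_comb hn hP
  have happ := congrArg (fun f : MonoidAlgebra K (FreeCommMagma (Fin 3)) =>
    Finsupp.lapply (M := K) (R := K) w f.coeff) he
  have e1 : ∀ r : ℕ, ((lpow x3 r ((x3 * y3) * z3) : FreeCommMagma (Fin 3)) = w) = False :=
    fun r => eq_false fun h => hr1 r h.symm
  have e2 : ∀ r : ℕ, ((lpow x3 r ((x3 * z3) * y3) : FreeCommMagma (Fin 3)) = w) = False :=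
    fun r => eq_false fun h => hr2 r h.symm
  have e3 : ∀ r : ℕ, ((lpow x3 r (y3 * z3) : FreeCommMagma (Fin 3)) = w) = False :=
    fun r => eq_false fun h => hr3 r h.symm
  simp only [comb, mono, MonoidAlgebra.coeff_single, MonoidAlgebra.coeff_add,
    MonoidAlgebra.coeff_sum, MonoidAlgebra.coeff_smul, map_add, map_sum, map_smul,
    Finsupp.lapply_apply, Finsupp.single_eq_same] at happ
  have z1 : ∑ x ∈ Finset.range n,
      B.coeff x • (Finsupp.single (lpow x3 x ((x3 * y3) * z3)) (1:K)) w = 0 :=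
    Finset.sum_eq_zero fun k _ => by
      rw [Finsupp.single_eq_of_ne (hr1 k), smul_zero]
  have z2 : ∑ x ∈ Finset.range n,
      C.coeff x • (Finsupp.single (lpow x3 x ((x3 * z3) * y3)) (1:K)) w = 0 :=
    Finset.sum_eq_zero fun k _ => by
      rw [Finsupp.single_eq_of_ne (hr2 k), smul_zero]
  have z3 : ∑ x ∈ Finset.range (n + 1),
      G.coeff x • (Finsupp.single (lpow x3 x (y3 * z3)) (1:K)) w = 0 :=
    Finset.sum_eq_zero fun k _ => by
      rw [Finsupp.single_eq_of_ne (hr3 k), smul_zero]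
  rw [z1, z2, z3] at happ
  simp at happ

end Evanescent
open Evanescent in
/-- (i) There is no train Peirce-evanescent identity of degree
`(1,1,1)`; (ii) for `n ≥ 2` and every monomial `w` of multidegree `(n,1,1)` not of any of
the forms `x^{{r}}((x·y)·z)`, `x^{{r}}((x·z)·y)`, `x^{{r}}(y·z)`, there is a unique `P_w`
in the span of `{x^{{k}}((x·y)·z) : k ≤ n−1} ∪ {x^{{k}}((x·z)·y) : k ≤ n−1}
∪ {x^{{k}}(y·z) : k ≤ n}` with `ε(P_w) = 1` and
`∂ₓ(w − P_w) = ∂_y(w − P_w) = ∂_z(w − P_w) = 0`; consequently `w − P_w` is a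
Peirce-evanescent identity. -/
theorem train_identities_multidegree_n_one_one
    {K : Type*} [Field K] (hchar : (2 : K) ≠ 0) :
    (∀ a b c d e g : K,
      (∀ i : Fin 3, Dp K i (a • mono K (x3 * (y3 * z3)) + b • mono K ((x3 * y3) * z3)
        + c • mono K ((x3 * z3) * y3) + d • mono K (x3 * y3)
        + e • mono K (x3 * z3) + g • mono K (y3 * z3)) = 0) →
      a • mono K (x3 * (y3 * z3)) + b • mono K ((x3 * y3) * z3)
        + c • mono K ((x3 * z3) * y3) + d • mono K (x3 * y3)
        + e • mono K (x3 * z3) + g • mono K (y3 * z3) = 0) ∧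
    (∀ n : ℕ, 2 ≤ n → ∀ w : FreeCommMagma (Fin 3),
      FreeCommMagma.count 0 w = n → FreeCommMagma.count 1 w = 1 →
      FreeCommMagma.count 2 w = 1 →
      (∀ r : ℕ, w ≠ lpow x3 r ((x3 * y3) * z3)) →
      (∀ r : ℕ, w ≠ lpow x3 r ((x3 * z3) * y3)) →
      (∀ r : ℕ, w ≠ lpow x3 r (y3 * z3)) →
      (∃! P : MonoidAlgebra K (FreeCommMagma (Fin 3)),
        P ∈ trainSpan3 K n ∧ aug K P = 1 ∧
        ∀ i : Fin 3, Dp K i (mono K w - P) = 0) ∧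
      (∀ P : MonoidAlgebra K (FreeCommMagma (Fin 3)),
        P ∈ trainSpan3 K n → aug K P = 1 →
        (∀ i : Fin 3, Dp K i (mono K w - P) = 0) →
        mono K w - P ≠ 0 ∧ aug K (mono K w - P) = 0)) := by
  constructor
  · -- Part (i)
    intro a b c d e g h
    have conv : ∀ i : Fin 3,
        Dp K i (a • mono K (x3 * (y3 * z3)) + b • mono K ((x3 * y3) * z3)
          + c • mono K ((x3 * z3) * y3) + d • mono K (x3 * y3)
          + e • mono K (x3 * z3) + g • mono K (y3 * z3))
        = a • FreeCommMagma.peirce K i (x3 * (y3 * z3))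
          + b • FreeCommMagma.peirce K i ((x3 * y3) * z3)
          + c • FreeCommMagma.peirce K i ((x3 * z3) * y3)
          + d • FreeCommMagma.peirce K i (x3 * y3)
          + e • FreeCommMagma.peirce K i (x3 * z3)
          + g • FreeCommMagma.peirce K i (y3 * z3) := by
      intro i
      simp only [map_add, map_smul, Dp_mono]
    have h0 := (conv 0).symm.trans (h 0)
    have h1 := (conv 1).symm.trans (h 1)
    have h2 := (conv 2).symm.trans (h 2)
    rw [peirce_v1_0, peirce_u1_0, peirce_u2_0, peirce_xy_0, peirce_xz_0, peirce_u3_0] at h0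
    rw [peirce_v1_1, peirce_u1_1, peirce_u2_1, peirce_xy_1, peirce_xz_1, peirce_u3_1] at h1
    rw [peirce_v1_2, peirce_u1_2, peirce_u2_2, peirce_xy_2, peirce_xz_2, peirce_u3_2] at h2
    have co : ∀ (m : ℕ) (pl : Polynomial K), pl = 0 → pl.coeff m = 0 := by
      intro m pl hpl; rw [hpl, Polynomial.coeff_zero]
    have c01 := co 1 _ h0
    have c02 := co 2 _ h0
    have c11 := co 1 _ h1
    have c12 := co 2 _ h1
    have c21 := co 1 _ h2
    have c22 := co 2 _ h2
    simp only [Polynomial.coeff_add, Polynomial.coeff_smul, Polynomial.coeff_X_pow,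
      Polynomial.coeff_X_one, Polynomial.coeff_X, smul_eq_mul, smul_zero,
      Polynomial.coeff_zero] at c01 c02 c11 c12 c21 c22
    norm_num at c01 c02 c11 c12 c21 c22
    have ha : a = 0 := by
      have h2a : (2:K) * a = 2 * 0 := by rw [mul_zero]; linear_combination c12 + c22 - c02
      exact mul_left_cancel₀ hchar h2a
    have hb : b = 0 := by
      have h2b : (2:K) * b = 2 * 0 := by rw [mul_zero]; linear_combination c12 + c02 - c22
      exact mul_left_cancel₀ hchar h2b
    have hc : c = 0 := by
      have h2c : (2:K) * c = 2 * 0 := by rw [mul_zero]; linear_combination c22 + c02 - c12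
      exact mul_left_cancel₀ hchar h2c
    have hd : d = 0 := by
      have h2d : (2:K) * d = 2 * 0 := by
        rw [mul_zero]; linear_combination c01 + c11 - c21 - ha - hc + hb
      exact mul_left_cancel₀ hchar h2d
    have he : e = 0 := by
      have h2e : (2:K) * e = 2 * 0 := by
        rw [mul_zero]; linear_combination c01 + c21 - c11 - ha - hb + hc
      exact mul_left_cancel₀ hchar h2e
    have hg : g = 0 := by
      have h2g : (2:K) * g = 2 * 0 := by
        rw [mul_zero]; linear_combination c11 + c21 - c01 - hb - hc + ha
      exact mul_left_cancel₀ hchar h2g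
    rw [ha, hb, hc, hd, he, hg]
    simp
  · -- Part (ii)
    intro n hn w h0 h1 h2 hr1 hr2 hr3
    induction w using Quot.ind with
    | _ u =>
    have h0' : countAux 0 u = n := h0
    have h1' : countAux 1 u = 1 := h1
    have h2' : countAux 2 u = 1 := h2
    have hmul : ∀ j : Fin 3, u ≠ .of j := by
      intro j hj
      subst hj
      fin_cases j <;> simp [countAux] at h0' h1' h2' <;> omega
    obtain ⟨P, hPmem, hPaug, hPd⟩ := exists_P hchar hn u h0' h1' h2' hmul
    constructor
    · refine ⟨P, ⟨hPmem, hPaug, hPd⟩, ?_⟩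
      rintro Q ⟨hQmem, hQaug, hQd'⟩
      have hQd : ∀ i : Fin 3, Dp K i (mono K (FreeCommMagma.mk u) - Q) = 0 := hQd'
      have hz : ∀ i : Fin 3, Dp K i (Q - P) = 0 := by
        intro i
        have hqp : Q - P = (mono K (FreeCommMagma.mk u) - P)
            - (mono K (FreeCommMagma.mk u) - Q) := by abel
        rw [hqp, map_sub, hPd i, hQd i, sub_zero]
      have := span_dp_zero hchar (by omega) (Submodule.sub_mem _ hQmem hPmem) hz
      exact sub_eq_zero.mp this
    · intro Q hQmem hQaug hQd
      constructor
      · intro hzero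
        exact mono_ne_span (by omega) hr1 hr2 hr3 hQmem (sub_eq_zero.mp hzero)
      · change aug K (mono K (FreeCommMagma.mk u) - Q) = 0
        rw [map_sub, aug_mono, hQaug, sub_self]
end
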